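/- In a finite extensive-form game of perfect information with real-valued payoffs, a subgame perfect Nash equilibrium exists (backward induction). -/
import Mathlib


/-- A finite extensive-form game tree of perfect information: a leaf carries a
payoff vector, an internal node is labelled by the acting player and has a
nonempty (indexed by `Fin (n+1)`) family of subtrees. -/
inductive GameTree (N : Type) : Type
  | leaf : (N → ℝ) → GameTree N
  | node : N → (n : ℕ) → (Fin (n + 1) → GameTree N) → GameTree N

/-- A strategy profile: at every (sub)tree it selects an index; at a node with
`n+1` children, the chosen child is the index taken modulo `n+1`. -/
def Strategy (N : Type) : Type := GameTree N → ℕ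

/-- The payoff vector obtained at the leaf reached by following the profile. -/
def outcome {N : Type} (σ : Strategy N) : GameTree N → (N → ℝ)
  | .leaf p => p
  | .node i n f => outcome σ (f ⟨σ (.node i n f) % (n + 1), Nat.mod_lt _ (Nat.succ_pos n)⟩)

/-- The subtree relation. -/
inductive IsSubtree {N : Type} : GameTree N → GameTree N → Prop
  | refl (t : GameTree N) : IsSubtree t t
  | child {t' : GameTree N} (i : N) (n : ℕ) (f : Fin (n + 1) → GameTree N)
      (j : Fin (n + 1)) : IsSubtree t' (f j) → IsSubtree t' (GameTree.node i n f)

/-- Subgame perfect Nash equilibrium: in every subtree, the acting player's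
selected child maximizes her continuation payoff given the profile. -/
def SPNE {N : Type} (σ : Strategy N) (t : GameTree N) : Prop :=
  ∀ t', IsSubtree t' t →
    ∀ (i : N) (n : ℕ) (f : Fin (n + 1) → GameTree N), t' = GameTree.node i n f →
      ∀ j : Fin (n + 1), outcome σ (f j) i ≤ outcome σ t' i

noncomputable def bestIdx {n : ℕ} (g : Fin (n + 1) → ℝ) : Fin (n + 1) :=
  (Finite.exists_max g).choose

lemma bestIdx_spec {n : ℕ} (g : Fin (n + 1) → ℝ) (j : Fin (n + 1)) :
    g j ≤ g (bestIdx g) := (Finite.exists_max g).choose_spec j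

noncomputable def bi {N : Type} : GameTree N → (N → ℝ)
  | .leaf p => p
  | .node i _ f => bi (f (bestIdx (fun j => bi (f j) i)))

noncomputable def sigmaBI {N : Type} : Strategy N := fun t =>
  match t with
  | .leaf _ => 0
  | .node i _ f => (bestIdx (fun j => bi (f j) i)).val

lemma outcome_sigmaBI {N : Type} (t : GameTree N) : outcome sigmaBI t = bi t := by
  induction t with
  | leaf p => rfl
  | node i n f ih =>
      have hidx : (⟨sigmaBI (.node i n f) % (n + 1), Nat.mod_lt _ (Nat.succ_pos n)⟩ :
          Fin (n + 1)) = bestIdx (fun j => bi (f j) i) := by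
        apply Fin.ext
        simp [sigmaBI, Nat.mod_eq_of_lt (bestIdx (fun j => bi (f j) i)).isLt]
      show outcome sigmaBI (f _) = _
      rw [hidx, ih]
      rfl

/-- In a finite extensive-form game of perfect information with
real-valued payoffs, a subgame perfect Nash equilibrium exists. -/
theorem spne_exists {N : Type} (t : GameTree N) : ∃ σ : Strategy N, SPNE σ t := by
  refine ⟨sigmaBI, fun t' _ i n f ht j => ?_⟩
  subst ht
  rw [outcome_sigmaBI, outcome_sigmaBI]
  exact bestIdx_spec (fun j => bi (f j) i) j
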